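/- arXiv:1101.4111 — 4 statements merged into one kernel-verified Lean document; each statement's English description precedes it below -/
import Mathlib

section
/- Let $p: \call C \to \call D$ be a covering of acyclic categories, $\gamma = (e_1,\dots,e_k)$ an edge path in $\call D$ from $d$ to $d'$, and $c$ an object of $\call C$ with $p(c) = d$. Then there exists a unique edge path $\delta = (f_1,\dots,f_k)$ in $\call C$ starting at $c$ with $p(\delta) = \gamma$. -/
open CategoryTheory

/-- `C` is an acyclic (loop-free) category. -/
def IsAcyclicCat (C : Type*) [Category C] : Prop :=
  (∀ (a b : C) (f : a ⟶ b) (g : b ⟶ a), f ≫ g = 𝟙 a → g ≫ f = 𝟙 b → a = b) ∧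
  (∀ (a : C) (f : a ⟶ a), f = 𝟙 a)

/-- `p : C ⥤ D` is a covering of categories (bijective on stars and costars). -/
def IsCatCovering {C D : Type*} [Category C] [Category D] (p : C ⥤ D) : Prop :=
  ∀ c : C,
    Function.Bijective (fun x : Σ a : C, a ⟶ c =>
      (⟨p.obj x.1, p.map x.2⟩ : Σ d : D, d ⟶ p.obj c)) ∧
    Function.Bijective (fun x : Σ b : C, c ⟶ b =>
      (⟨p.obj x.1, p.map x.2⟩ : Σ d : D, p.obj c ⟶ d))

/-- An edge of a category: a morphism together with a direction of traversal
(`true` = forwards, `false` = backwards). -/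
def CatEdge (C : Type*) [Category C] := (Σ a b : C, a ⟶ b) × Bool

/-- The starting point of a traversed edge. -/
def edgeSrc {C : Type*} [Category C] (e : CatEdge C) : C :=
  bif e.2 then e.1.1 else e.1.2.1

/-- The endpoint of a traversed edge. -/
def edgeTgt {C : Type*} [Category C] (e : CatEdge C) : C :=
  bif e.2 then e.1.2.1 else e.1.1

/-- `IsEChain d l d'` : the list of traversed edges `l` is an edge path from
`d` to `d'`. -/
def IsEChain {C : Type*} [Category C] : C → List (CatEdge C) → C → Prop
  | d, [], d' => d = d'
  | d, e :: l, d' => edgeSrc e = d ∧ IsEChain (edgeTgt e) l d'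

/-- The image of a traversed edge under a functor. -/
def mapEdge {C D : Type*} [Category C] [Category D] (p : C ⥤ D) :
    CatEdge C → CatEdge D :=
  fun e => (⟨p.obj e.1.1, p.obj e.1.2.1, p.map e.1.2.2⟩, e.2)

private lemma sigma_triple_snd {D : Type*} [Category D] {a a' b : D}
    {f : a ⟶ b} {f' : a' ⟶ b}
    (h : (⟨a, ⟨b, f⟩⟩ : Σ x y : D, x ⟶ y) = ⟨a', ⟨b, f'⟩⟩) :
    (⟨a, f⟩ : Σ x, x ⟶ b) = ⟨a', f'⟩ := by
  obtain ⟨h1, h2⟩ := Sigma.mk.inj_iff.mp h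
  subst h1
  obtain ⟨-, h3⟩ := Sigma.mk.inj_iff.mp (eq_of_heq h2)
  rw [eq_of_heq h3]

/-- Unique lifting of edge paths along a covering of acyclic categories: given
an edge path `γ` in `D` from `d` to `d'` and an object `c` over `d`, there is a
unique edge path in `C` starting at `c` which maps to `γ` under `p`. -/
theorem unique_edge_path_lifting {C D : Type*} [Category C] [Category D]
    (hC : IsAcyclicCat C) (hD : IsAcyclicCat D)
    (p : C ⥤ D) (hp : IsCatCovering p)
    (d d' : D) (γ : List (CatEdge D)) (hγ : IsEChain d γ d')
    (c : C) (hc : p.obj c = d) :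
    ∃! δ : List (CatEdge C),
      (∃ c' : C, IsEChain c δ c') ∧ δ.map (mapEdge p) = γ := by
  clear hC hD
  revert hc hγ
  revert d c
  induction γ with
  | nil =>
    intro d c hγ hc
    refine ⟨[], ⟨⟨c, rfl⟩, rfl⟩, ?_⟩
    rintro δ ⟨-, hmap⟩
    exact List.map_eq_nil_iff.mp hmap
  | cons e γ ih =>
    intro d c hγ hc
    subst hc
    obtain ⟨hsrc, htail⟩ := hγ
    obtain ⟨⟨a, b, f⟩, dir⟩ := e
    cases dir with
    | true =>
      have ha : a = p.obj c := hsrc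
      subst ha
      obtain ⟨⟨x₁, x₂⟩, hx⟩ := (hp c).2.surjective ⟨b, f⟩
      have hb : p.obj x₁ = b := congrArg Sigma.fst hx
      subst hb
      have hf : p.map x₂ = f := eq_of_heq (Sigma.mk.inj_iff.mp hx).2
      subst hf
      obtain ⟨δ, ⟨⟨c', hδ⟩, hmap⟩, hu⟩ := ih _ x₁ htail rfl
      refine ⟨(⟨c, x₁, x₂⟩, true) :: δ, ⟨⟨c', rfl, hδ⟩, ?_⟩, ?_⟩
      · exact congrArg (List.cons _) hmap
      · rintro δ' ⟨⟨c'', hchain⟩, hmap'⟩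
        cases δ' with
        | nil => simp at hmap'
        | cons e₀ δ₀ =>
          obtain ⟨⟨u, v, g⟩, dir₀⟩ := e₀
          change mapEdge p _ :: List.map (mapEdge p) δ₀ = _ at hmap'
          have hhead := List.head_eq_of_cons_eq hmap'
          have htl := List.tail_eq_of_cons_eq hmap'
          have hd : dir₀ = true := congrArg Prod.snd hhead
          subst hd
          have hu' : c = u := hchain.1.symm
          subst hu'
          have hs : (⟨p.obj c, ⟨p.obj v, p.map g⟩⟩ : Σ a b : D, a ⟶ b)
              = ⟨p.obj c, ⟨p.obj x₁, p.map x₂⟩⟩ := congrArg Prod.fst hhead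
          have h2 : (⟨p.obj v, p.map g⟩ : Σ d, p.obj c ⟶ d)
              = ⟨p.obj x₁, p.map x₂⟩ :=
            eq_of_heq (Sigma.mk.inj_iff.mp hs).2
          have h3 : (⟨v, g⟩ : Σ b, c ⟶ b) = ⟨x₁, x₂⟩ :=
            (hp c).2.injective h2
          have hv : v = x₁ := congrArg Sigma.fst h3
          subst hv
          have hg : g = x₂ := eq_of_heq (Sigma.mk.inj_iff.mp h3).2
          subst hg
          have := hu δ₀ ⟨⟨c'', hchain.2⟩, htl⟩
          rw [this]
    | false =>
      have hb : b = p.obj c := hsrc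
      subst hb
      obtain ⟨⟨x₁, x₂⟩, hx⟩ := (hp c).1.surjective ⟨a, f⟩
      have ha : p.obj x₁ = a := congrArg Sigma.fst hx
      subst ha
      have hf : p.map x₂ = f := eq_of_heq (Sigma.mk.inj_iff.mp hx).2
      subst hf
      obtain ⟨δ, ⟨⟨c', hδ⟩, hmap⟩, hu⟩ := ih _ x₁ htail rfl
      refine ⟨(⟨x₁, c, x₂⟩, false) :: δ, ⟨⟨c', rfl, hδ⟩, ?_⟩, ?_⟩
      · exact congrArg (List.cons _) hmap
      · rintro δ' ⟨⟨c'', hchain⟩, hmap'⟩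
        cases δ' with
        | nil => simp at hmap'
        | cons e₀ δ₀ =>
          obtain ⟨⟨u, v, g⟩, dir₀⟩ := e₀
          change mapEdge p _ :: List.map (mapEdge p) δ₀ = _ at hmap'
          have hhead := List.head_eq_of_cons_eq hmap'
          have htl := List.tail_eq_of_cons_eq hmap'
          have hd : dir₀ = false := congrArg Prod.snd hhead
          subst hd
          have hv' : c = v := hchain.1.symm
          subst hv'
          have hs : (⟨p.obj u, ⟨p.obj c, p.map g⟩⟩ : Σ a b : D, a ⟶ b)
              = ⟨p.obj x₁, ⟨p.obj c, p.map x₂⟩⟩ := congrArg Prod.fst hhead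
          have h2 : (⟨p.obj u, p.map g⟩ : Σ d, d ⟶ p.obj c)
              = ⟨p.obj x₁, p.map x₂⟩ := sigma_triple_snd hs
          have h3 : (⟨u, g⟩ : Σ a, a ⟶ c) = ⟨x₁, x₂⟩ :=
            (hp c).1.injective h2
          have hu' : u = x₁ := congrArg Sigma.fst h3
          subst hu'
          have hg : g = x₂ := eq_of_heq (Sigma.mk.inj_iff.mp h3).2
          subst hg
          have := hu δ₀ ⟨⟨c'', hchain.2⟩, htl⟩
          rw [this]
end

section
/- Let $p: \call C \to \call D$ be a Galois covering of acyclic categories with group $G = \mathrm{Aut}(p)$. Then $G$ acts transitively on each fiber $p^{-1}(m)$ over a morphism $m$ of $\call D$, and the induced functor $\call C / G \to \call D$ is an isomorphism of categories. -/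
open CategoryTheory

/-- The total set of morphisms of a category. -/
def Mor (C : Type*) [Category C] := Σ a b : C, a ⟶ b

/-- The action of a functor on total morphisms. -/
def morMap {C D : Type*} [Category C] [Category D] (p : C ⥤ D) :
    Mor C → Mor D :=
  fun m => ⟨p.obj m.1, p.obj m.2.1, p.map m.2.2⟩

/-- The deck transformation group of `p` : automorphisms `φ` of `C` with
`φ ⋙ p = p`. -/
def DeckSet {C D : Type*} [Category C] [Category D] (p : C ⥤ D) :
    Set (C ⥤ C) :=
  {φ | (∃ ψ : C ⥤ C, φ ⋙ ψ = 𝟭 C ∧ ψ ⋙ φ = 𝟭 C) ∧ φ ⋙ p = p}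

/-- Let `p : C → D` be a Galois covering of acyclic categories, with deck group
`G = Aut(p)` acting transitively on the fibers over objects.  Then `G` acts
transitively on the fiber over each morphism of `D`, and the induced functor
`C/G → D` is an isomorphism of categories: `p` is surjective on objects and on
morphisms, and two objects (resp. morphisms) of `C` have the same image iff
they lie in the same `G`-orbit — i.e. objects and morphisms of `D` correspond
bijectively to the `G`-orbits of objects and morphisms of `C`. -/
theorem galois_covering_quotient_iso {C D : Type*} [Category C] [Category D]
    [Nonempty C] [IsConnected D]
    (hC : IsAcyclicCat C) (hD : IsAcyclicCat D)
    (p : C ⥤ D) (hp : IsCatCovering p)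
    (hGalois : ∀ c c' : C, p.obj c = p.obj c' →
      ∃ φ ∈ DeckSet p, φ.obj c = c') :
    (∀ m m' : Mor C, morMap p m = morMap p m' →
      ∃ φ ∈ DeckSet p, morMap φ m = m') ∧
    Function.Surjective p.obj ∧
    (∀ m : Mor D, ∃ mc : Mor C, morMap p mc = m) ∧
    (∀ c c' : C, p.obj c = p.obj c' ↔ ∃ φ ∈ DeckSet p, φ.obj c = c') ∧
    (∀ m m' : Mor C, morMap p m = morMap p m' ↔
      ∃ φ ∈ DeckSet p, morMap φ m = m') := by
  -- deck transformations commute with `p` on total morphisms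
  have hdeck : ∀ (φ : C ⥤ C), φ ⋙ p = p →
      ∀ m : Mor C, morMap p (morMap φ m) = morMap p m := by
    intro φ hφ m
    have h : morMap (φ ⋙ p) m = morMap p (morMap φ m) := rfl
    rw [← h, hφ]
  -- key injectivity: morphisms with the same source and same image are equal
  have key : ∀ m m' : Mor C, m.1 = m'.1 → morMap p m = morMap p m' → m = m' := by
    rintro ⟨a, b, f⟩ ⟨a', b', f'⟩ h1 h2
    dsimp at h1
    subst h1
    simp only [morMap] at h2
    have h3 : (⟨p.obj b, p.map f⟩ : Σ e : D, p.obj a ⟶ e) = ⟨p.obj b', p.map f'⟩ :=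
      eq_of_heq (Sigma.mk.inj_iff.mp h2).2
    have h4 := (hp a).2.injective (a₁ := ⟨b, f⟩) (a₂ := ⟨b', f'⟩) h3
    refine Sigma.mk.inj_iff.mpr ?_
    exact ⟨rfl, heq_of_eq h4⟩
  -- transitivity on fibers over morphisms
  have htrans : ∀ m m' : Mor C, morMap p m = morMap p m' →
      ∃ φ ∈ DeckSet p, morMap φ m = m' := by
    intro m m' h
    have h1 : p.obj m.1 = p.obj m'.1 := congrArg Sigma.fst h
    obtain ⟨φ, hφ, hφ1⟩ := hGalois m.1 m'.1 h1
    refine ⟨φ, hφ, key (morMap φ m) m' hφ1 ?_⟩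
    rw [hdeck φ hφ.2 m, h]
  -- surjectivity on objects
  have hsurj : Function.Surjective p.obj := by
    have step : ∀ (d d' : D) (_ : d ⟶ d'),
        (∃ c, p.obj c = d) = (∃ c, p.obj c = d') := by
      intro d d' f
      apply propext
      constructor
      · rintro ⟨c, rfl⟩
        obtain ⟨⟨b, g⟩, hb⟩ := (hp c).2.surjective ⟨d', f⟩
        exact ⟨b, congrArg Sigma.fst hb⟩
      · rintro ⟨c, rfl⟩
        obtain ⟨⟨b, g⟩, hb⟩ := (hp c).1.surjective ⟨d, f⟩
        exact ⟨b, congrArg Sigma.fst hb⟩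
    have hconst := constant_of_preserves_morphisms (J := D) (α := Prop)
      (fun d => ∃ c, p.obj c = d) step
    intro d
    obtain ⟨c0⟩ := ‹Nonempty C›
    exact cast (hconst (p.obj c0) d) ⟨c0, rfl⟩
  -- surjectivity on morphisms
  have morsurj : ∀ m : Mor D, ∃ mc : Mor C, morMap p mc = m := by
    rintro ⟨d, d', g⟩
    obtain ⟨c, rfl⟩ := hsurj d
    obtain ⟨⟨b, f⟩, hb⟩ := (hp c).2.surjective ⟨d', g⟩
    exact ⟨⟨c, b, f⟩, congrArg (Sigma.mk (p.obj c)) hb⟩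
  refine ⟨htrans, hsurj, morsurj, ?_, ?_⟩
  · intro c c'
    constructor
    · exact hGalois c c'
    · rintro ⟨φ, hφ, rfl⟩
      exact (Functor.congr_obj hφ.2 c).symm
  · intro m m'
    refine ⟨htrans m m', ?_⟩
    rintro ⟨φ, hφ, rfl⟩
    exact (hdeck φ hφ.2 m).symm
end

section
/- Let $\call C$ be an acyclic category with a group action $G \curvearrowright \call C$ which is the Galois group action of a covering map $\varphi : \call C \to \call D$. Then the Babson–Kozlov condition holds: for $t \geq 2$ and composable morphism chains $(m_1,\dots,m_{t-1},m_a)$ and $(m_1,\dots,m_{t-1},m_b)$ with $G m_a = G m_b$, there exists $g \in G$ with $g(m_a) = m_b$ and $g(m_i) = m_i$ for all $i < t$. Consequently $m_a = m_b$. -/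
open CategoryTheory

/-- A list of morphisms forms a composable chain. -/
def ChainOK {C : Type*} [Category C] : List (Mor C) → Prop
  | [] => True
  | [_] => True
  | m :: m' :: l => m.2.1 = m'.1 ∧ ChainOK (m' :: l)

section Aux
variable {C D : Type*} [Category C] [Category D]

lemma costar_key (p : C ⥤ D) (hp : IsCatCovering p) (φ : C ⥤ C) (hφ : φ ⋙ p = p)
    {a b : C} (ha : φ.obj a = a) (f : a ⟶ b) :
    (⟨b, f⟩ : Σ b' : C, a ⟶ b') = ⟨φ.obj b, eqToHom ha.symm ≫ φ.map f⟩ := by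
  apply (hp a).2.injective
  have h2 : p.obj (φ.obj b) = p.obj b := Functor.congr_obj hφ b
  have hm := Functor.congr_hom hφ f
  simp only [Functor.comp_map] at hm
  refine Sigma.ext h2.symm ?_
  simp [hm, eqToHom_map]

lemma star_key (p : C ⥤ D) (hp : IsCatCovering p) (φ : C ⥤ C) (hφ : φ ⋙ p = p)
    {a b : C} (ha : φ.obj a = a) (f : b ⟶ a) :
    (⟨b, f⟩ : Σ b' : C, b' ⟶ a) = ⟨φ.obj b, φ.map f ≫ eqToHom ha⟩ := by
  apply (hp a).1.injective
  have h2 : p.obj (φ.obj b) = p.obj b := Functor.congr_obj hφ b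
  have hm := Functor.congr_hom hφ f
  simp only [Functor.comp_map] at hm
  refine Sigma.ext h2.symm ?_
  simp [hm, eqToHom_map]

lemma deck_obj_fix [IsConnected C] (p : C ⥤ D) (hp : IsCatCovering p)
    (φ : C ⥤ C) (hφ : φ ⋙ p = p) (q : C) (hq : φ.obj q = q) (c : C) :
    φ.obj c = c := by
  refine induct_on_objects {c | φ.obj c = c} hq ?_ c
  intro j₁ j₂ f
  constructor
  · intro h1
    have := costar_key p hp φ hφ h1 f
    exact (congrArg Sigma.fst this).symm
  · intro h2
    have := star_key p hp φ hφ h2 f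
    exact (congrArg Sigma.fst this).symm

lemma hom_of_heq {a b b' : C} (hb : b' = b) {f : a ⟶ b} {g : a ⟶ b'}
    (h : HEq f g) : g = f ≫ eqToHom hb.symm := by
  subst hb; simpa using (eq_of_heq h).symm

lemma mor_eq_of {a b a' b' : C} (ha : a' = a) (hb : b' = b) (f : a ⟶ b)
    (f' : a' ⟶ b') (h : f' = eqToHom ha ≫ f ≫ eqToHom hb.symm) :
    (⟨a', b', f'⟩ : Mor C) = ⟨a, b, f⟩ := by
  subst ha hb; simpa using h

lemma deck_mor_fix [IsConnected C] (p : C ⥤ D) (hp : IsCatCovering p)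
    (φ : C ⥤ C) (hφ : φ ⋙ p = p) (q : C) (hq : φ.obj q = q) (m : Mor C) :
    morMap φ m = m := by
  obtain ⟨a, b, f⟩ := m
  have ha : φ.obj a = a := deck_obj_fix p hp φ hφ q hq a
  have key := costar_key p hp φ hφ ha f
  have hb : φ.obj b = b := (congrArg Sigma.fst key).symm
  obtain ⟨-, hf⟩ := Sigma.mk.inj_iff.mp key
  have h1 : eqToHom ha.symm ≫ φ.map f = f ≫ eqToHom hb.symm := hom_of_heq hb hf
  have h2 : φ.map f = eqToHom ha ≫ f ≫ eqToHom hb.symm := by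
    rw [← h1]; simp
  exact mor_eq_of ha hb f (φ.map f) h2

end Aux

/-- Babson–Kozlov condition for the Galois action of a covering of acyclic
categories: if `(m₁,…,m_{t-1},m_a)` and `(m₁,…,m_{t-1},m_b)` are composable
chains (`t ≥ 2`, i.e. the common initial chain `ms` is nonempty) and `m_a`,
`m_b` lie in the same `G`-orbit, then some `g ∈ G` satisfies `g m_a = m_b` and
`g mᵢ = mᵢ` for all `i < t`; consequently `m_a = m_b`. -/



theorem babson_kozlov_condition {C D : Type*} [Category C] [Category D]
    [IsConnected C]
    (hC : IsAcyclicCat C) (hD : IsAcyclicCat D)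
    (p : C ⥤ D) (hp : IsCatCovering p)
    (hGalois : ∀ c c' : C, p.obj c = p.obj c' →
      ∃ φ ∈ DeckSet p, φ.obj c = c')
    (q r s : C) (ma : q ⟶ r) (mb : q ⟶ s)
    (ms : List (Mor C)) (hne : ms ≠ [])
    (hchaina : ChainOK (ms ++ ([⟨q, r, ma⟩] : List (Mor C))))
    (hchainb : ChainOK (ms ++ ([⟨q, s, mb⟩] : List (Mor C))))
    (horb : ∃ g ∈ DeckSet p, morMap g ⟨q, r, ma⟩ = (⟨q, s, mb⟩ : Mor C)) :
    (∃ g ∈ DeckSet p, morMap g ⟨q, r, ma⟩ = (⟨q, s, mb⟩ : Mor C) ∧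
      ∀ m ∈ ms, morMap g m = m) ∧
    (⟨q, r, ma⟩ : Mor C) = ⟨q, s, mb⟩ := by
  obtain ⟨g, ⟨hinv, hgp⟩, hg⟩ := horb
  have hq : g.obj q = q := congrArg Sigma.fst hg
  have hfix : ∀ m : Mor C, morMap g m = m := deck_mor_fix p hp g hgp q hq
  have hab : (⟨q, r, ma⟩ : Mor C) = ⟨q, s, mb⟩ := (hfix ⟨q, r, ma⟩).symm.trans hg
  exact ⟨⟨g, ⟨hinv, hgp⟩, hg, fun m _ => hfix m⟩, hab⟩
end

section
/- Let $\scr A$ be a complexified essential toric arrangement on $T_\Lambda$, with complement $M(\scr A)$, and let $\epsilon : \pi_1(M(\scr A)) \to \pi_1(T_\Lambda) \cong \mathbb{Z}^n$ be the homomorphism induced by inclusion. Then $\epsilon$ admits a group-theoretic section $\xi$ with $\epsilon \circ \xi = \mathrm{id}$. -/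
open CategoryTheory FundamentalGroupoid
open scoped FundamentalGroupoid

/-- The functor between fundamental groupoids induced by a continuous map. -/
noncomputable def piFunctor {X Y : Type} [TopologicalSpace X] [TopologicalSpace Y]
    (f : C(X, Y)) : FundamentalGroupoid X ⥤ FundamentalGroupoid Y :=
  fundamentalGroupoidFunctor.map (X := TopCat.of X) (Y := TopCat.of Y) (TopCat.ofHom f)

/-- The homomorphism of fundamental groups induced by a continuous map. -/
noncomputable def pi1map {X Y : Type} [TopologicalSpace X] [TopologicalSpace Y]
    (f : C(X, Y)) (x : X) : FundamentalGroup X x →* FundamentalGroup Y (f x) :=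
  Functor.mapEnd (FundamentalGroupoid.mk x) (piFunctor f)

attribute [local instance] Path.Homotopic.setoid

lemma section_of_homotopy {M X : Type} [TopologicalSpace M] [TopologicalSpace X]
    (ι : C(M, X)) (g : C(X, M)) (x₀ : M)
    (H : ContinuousMap.Homotopy (ι.comp g) (ContinuousMap.id X))
    (β : Path (g (ι x₀)) x₀)
    (hβ : ∀ t, ι (β t) = H (t, ι x₀)) :
    ∃ ξ : FundamentalGroup X (ι x₀) →* FundamentalGroup M x₀,
      (pi1map ι x₀).comp ξ = MonoidHom.id _ := by
  classical
  let e : FundamentalGroupoid.mk (g (ι x₀)) ≅ FundamentalGroupoid.mk x₀ :=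
    (Groupoid.isoEquivHom _ _).symm ⟦β⟧
  refine ⟨(e.conj.toMonoidHom.comp (pi1map g (ι x₀)) :
      FundamentalGroup X (ι x₀) →* FundamentalGroup M x₀), ?_⟩
  ext γ
  show (piFunctor ι).map (e.inv ≫ ((piFunctor g).map γ : FundamentalGroupoid.mk (g (ι x₀)) ⟶ FundamentalGroupoid.mk (g (ι x₀))) ≫ e.hom) = γ
  simp only [Functor.map_comp]
  obtain ⟨p, rfl⟩ := Path.Homotopic.Quotient.mk_surjective γ
  have nat := (FundamentalGroupoidFunctor.homotopicMapsNatIso H).naturality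
    (X := FundamentalGroupoid.mk (ι x₀)) (Y := FundamentalGroupoid.mk (ι x₀))
    (Path.Homotopic.Quotient.mk p)
  have hα : (FundamentalGroupoidFunctor.homotopicMapsNatIso H).app
      (FundamentalGroupoid.mk (ι x₀)) = (piFunctor ι).map e.hom := by
    show Path.Homotopic.Quotient.mk (H.evalAt (ι x₀)) = Path.Homotopic.Quotient.mk (β.map ι.continuous)
    congr 1; ext t; exact (hβ t).symm
  rw [hα] at nat
  have nat' : (piFunctor ι).map ((piFunctor g).map (Path.Homotopic.Quotient.mk p) : FundamentalGroupoid.mk (g (ι x₀)) ⟶ FundamentalGroupoid.mk (g (ι x₀))) ≫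
      (piFunctor ι).map e.hom = (piFunctor ι).map e.hom ≫ Path.Homotopic.Quotient.mk p := nat
  have hcancel : (piFunctor ι).map e.inv ≫ (piFunctor ι).map e.hom = 𝟙 _ := by
    rw [← CategoryTheory.Functor.map_comp, e.inv_hom_id, CategoryTheory.Functor.map_id]
  have key : (piFunctor ι).map e.inv ≫ ((piFunctor ι).map ((piFunctor g).map
      (Path.Homotopic.Quotient.mk p) : FundamentalGroupoid.mk (g (ι x₀)) ⟶ FundamentalGroupoid.mk (g (ι x₀))) ≫ (piFunctor ι).map e.hom) = Path.Homotopic.Quotient.mk p := by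
    refine (congrArg ((piFunctor ι).map e.inv ≫ ·) nat').trans ?_
    exact (Category.assoc _ _ _).symm.trans
      ((congrArg (· ≫ Path.Homotopic.Quotient.mk p) hcancel).trans (Category.id_comp _))
  exact (congrArg ((piFunctor ι).map e.inv ≫ ·) ((piFunctor ι).map_comp _ _)).trans key

noncomputable def cexpu (r : ℝ) : ℂˣ := Units.mk0 (Complex.exp (r : ℂ)) (Complex.exp_ne_zero _)

lemma continuous_mk0 {α : Type*} [TopologicalSpace α] {f : α → ℂ} (hf : Continuous f)
    (h0 : ∀ a, f a ≠ 0) : Continuous fun a => Units.mk0 (f a) (h0 a) :=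
  Units.continuous_iff.mpr ⟨hf, hf.inv₀ h0⟩

lemma continuous_cexpu : Continuous cexpu :=
  continuous_mk0 (Complex.continuous_exp.comp Complex.continuous_ofReal)
    (fun _ => Complex.exp_ne_zero _)


lemma cexpu_val (r : ℝ) : ((cexpu r : ℂˣ) : ℂ) = Complex.exp (r : ℂ) := rfl

lemma abs_cexpu (r : ℝ) : ‖((cexpu r : ℂˣ) : ℂ)‖ = Real.exp r := by
  simp [cexpu_val, Complex.norm_exp]

lemma units_prod_val {n : ℕ} (x : Fin n → ℂˣ) (p : Fin n → ℤ) :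
    ((∏ i, x i ^ p i : ℂˣ) : ℂ) = ∏ i, ((x i : ℂ)) ^ p i := by
  rw [← Units.coeHom_apply, map_prod]
  simp [Units.val_zpow_eq_zpow_val]

lemma abs_units_prod {n : ℕ} (x : Fin n → ℂˣ) (p : Fin n → ℤ) :
    ‖((∏ i, x i ^ p i : ℂˣ) : ℂ)‖ = ∏ i, ‖(x i : ℂ)‖ ^ p i := by
  rw [units_prod_val, norm_prod]
  simp [norm_zpow]

lemma prod_mul_cexpu {n : ℕ} (x : Fin n → ℂˣ) (w : Fin n → ℝ) (p : Fin n → ℤ) :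
    ∏ i, (x i * cexpu (w i)) ^ p i
      = (∏ i, x i ^ p i) * cexpu (∑ i, (p i : ℝ) * w i) := by
  simp only [mul_zpow, Finset.prod_mul_distrib]
  congr 1
  ext : 1
  rw [units_prod_val (fun i => cexpu (w i)) p]
  simp only [cexpu_val, ← Complex.exp_int_mul, ← Complex.exp_sum]
  push_cast
  rfl

open Polynomial in
lemma exists_generic {n : ℕ} (B : Finset (Fin n → ℤ)) :
    ∃ y₀ : Fin n → ℝ, ∀ p ∈ B, p ≠ 0 → ∑ i, (p i : ℝ) * y₀ i ≠ 0 := by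
  classical
  have hfac : ∀ p : Fin n → ℤ, p ≠ 0 →
      (∑ i, C ((p i : ℝ)) * X ^ ((i : ℕ) + 1)) ≠ 0 := by
    intro p hp
    obtain ⟨j, hj⟩ := Function.ne_iff.mp hp
    intro h0
    have hcoeff : (∑ i, C ((p i : ℝ)) * X ^ ((i : ℕ) + 1)).coeff ((j : ℕ) + 1)
        = (p j : ℝ) := by
      rw [finset_sum_coeff, Finset.sum_eq_single j]
      · simp [coeff_C_mul, coeff_X_pow]
      · intro i _ hij
        have : ¬((j : ℕ) + 1 = (i : ℕ) + 1) := fun h => hij (Fin.ext (by omega))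
        have h2 : ¬((j : ℕ) = (i : ℕ)) := fun h => hij (Fin.ext h).symm
        simp [coeff_C_mul, coeff_X_pow, this, h2]
      · simp
    rw [h0] at hcoeff
    simp at hcoeff
    exact hj (by exact_mod_cast hcoeff.symm)
  set q : ℝ[X] := ∏ p ∈ B.filter (· ≠ 0), (∑ i, C ((p i : ℝ)) * X ^ ((i : ℕ) + 1)) with hq
  have hqne : q ≠ 0 := by
    rw [hq, Finset.prod_ne_zero_iff]
    intro p hp
    exact hfac p (Finset.mem_filter.mp hp).2
  obtain ⟨c, hc⟩ : ∃ c : ℝ, ¬ q.IsRoot c := by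
    have := (Polynomial.finite_setOf_isRoot hqne).infinite_compl
    obtain ⟨c, hc⟩ := this.nonempty
    exact ⟨c, hc⟩
  refine ⟨fun i => c ^ ((i : ℕ) + 1), ?_⟩
  intro p hp hp0
  have heval : Polynomial.eval c (∑ i, C ((p i : ℝ)) * X ^ ((i : ℕ) + 1))
      = ∑ i, (p i : ℝ) * c ^ ((i : ℕ) + 1) := by
    simp [Polynomial.eval_finset_sum]
  have : Polynomial.eval c q ≠ 0 := hc
  rw [hq, Polynomial.eval_prod] at this
  have hfactor := Finset.prod_ne_zero_iff.mp this p (Finset.mem_filter.mpr ⟨hp, hp0⟩)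
  rw [heval] at hfactor
  exact hfactor

lemma exists_small {n : ℕ} (A : Finset ((Fin n → ℤ) × ℂˣ)) (R : (Fin n → ℤ) × ℂˣ → ℝ)
    (hR1 : ∀ p ∈ A, 0 < R p) :
    ∃ y : Fin n → ℝ, ∀ p ∈ A, (p.1 ≠ 0 → ∑ i, (p.1 i : ℝ) * y i ≠ 0) ∧
      (R p ≠ 1 → |∑ i, (p.1 i : ℝ) * y i| < |Real.log (R p)|) := by
  classical
  obtain ⟨y₀, hy₀⟩ := exists_generic (A.image Prod.fst)
  set Y : (Fin n → ℤ) × ℂˣ → ℝ := fun p => ∑ i, (p.1 i : ℝ) * y₀ i with hY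
  have hev : ∀ p ∈ A, ∀ᶠ t in nhdsWithin (0:ℝ) (Set.Ioi 0),
      (R p ≠ 1 → |t * Y p| < |Real.log (R p)|) := by
    intro p hp
    rcases eq_or_ne (R p) 1 with h1 | h1
    · filter_upwards with t h; exact absurd h1 h.elim
    · have hlog : |Real.log (R p)| > 0 :=
        abs_pos.mpr (Real.log_ne_zero_of_pos_of_ne_one (hR1 p hp) h1)
      have htend : Filter.Tendsto (fun t : ℝ => |t * Y p|)
          (nhdsWithin (0:ℝ) (Set.Ioi 0)) (nhds 0) := by
        have : Filter.Tendsto (fun t : ℝ => |t * Y p|) (nhds 0) (nhds 0) := by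
          have hc : Continuous fun t : ℝ => |t * Y p| :=
            (continuous_id.mul continuous_const).abs
          have := hc.tendsto 0
          simpa using this
        exact this.mono_left nhdsWithin_le_nhds
      filter_upwards [htend.eventually_lt_const hlog] with t ht _
      exact ht
  have hall := (Filter.eventually_all_finset A).mpr hev
  have hpos : ∀ᶠ t in nhdsWithin (0:ℝ) (Set.Ioi 0), t ∈ Set.Ioi (0:ℝ) :=
    Filter.eventually_iff.mpr self_mem_nhdsWithin
  obtain ⟨t, ht, hA⟩ := (hpos.and hall).exists
  refine ⟨fun i => t * y₀ i, ?_⟩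
  intro p hp
  have hsum : ∑ i, (p.1 i : ℝ) * (t * y₀ i) = t * Y p := by
    rw [hY, Finset.mul_sum]
    exact Finset.sum_congr rfl fun i _ => by ring
  constructor
  · intro hp0
    rw [hsum]
    exact mul_ne_zero (ne_of_gt ht) (hy₀ p.1 (Finset.mem_image_of_mem _ hp) hp0)
  · intro h1
    rw [hsum]
    exact hA p hp h1

section Main
variable {n : ℕ} (A : Finset ((Fin n → ℤ) × ℂˣ))

-- the toolbox around a fixed base point
lemma main_construction
    (hA : ∀ p ∈ A, ‖((p.2 : ℂˣ) : ℂ)‖ = 1)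
    (x₀f : Fin n → ℂˣ)
    (hx₀S : ∀ p ∈ A, (∏ i, x₀f i ^ p.1 i) ≠ p.2) :
    ∃ y : Fin n → ℝ,
      (∀ s : ℝ, s ∈ Set.Icc (0:ℝ) 1 →
        ∀ p ∈ A, (∏ i, (x₀f i * cexpu (s * y i)) ^ p.1 i) ≠ p.2) ∧
      (∀ p ∈ A, p.1 ≠ 0 →
        ∏ i, (Real.exp (y i) * ‖(x₀f i : ℂ)‖) ^ p.1 i ≠ 1) := by
  classical
  set R : (Fin n → ℤ) × ℂˣ → ℝ := fun p => ∏ i, ‖(x₀f i : ℂ)‖ ^ p.1 i with hR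
  have hRpos : ∀ p, 0 < R p := by
    intro p
    refine Finset.prod_pos fun i _ => zpow_pos ?_ _
    exact norm_pos_iff.mpr (Units.ne_zero _)
  obtain ⟨y, hy⟩ := exists_small A R (fun p _ => hRpos p)
  set Y : (Fin n → ℤ) × ℂˣ → ℝ := fun p => ∑ i, (p.1 i : ℝ) * y i with hYdef
  have core : ∀ p ∈ A, ∀ s : ℝ, |s| ≤ 1 → R p * Real.exp (s * Y p) = 1 → s * Y p = 0 := by
    intro p hp s hs heq
    rcases eq_or_ne (R p) 1 with h1 | h1
    · rw [h1, one_mul] at heq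
      rw [← Real.exp_zero] at heq
      exact Real.exp_injective heq
    · exfalso
      have h2 := (hy p hp).2 h1
      have hRe : R p = Real.exp (-(s * Y p)) := by
        rw [Real.exp_neg]
        exact eq_inv_of_mul_eq_one_left heq
      have hlog : Real.log (R p) = -(s * Y p) := by rw [hRe, Real.log_exp]
      have hle : |Real.log (R p)| ≤ |Y p| := by
        rw [hlog, abs_neg, abs_mul]
        calc |s| * |Y p| ≤ 1 * |Y p| := mul_le_mul_of_nonneg_right hs (abs_nonneg _)
        _ = |Y p| := one_mul _
      linarith
  have habsprod : ∀ (s : ℝ) (p : (Fin n → ℤ) × ℂˣ),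
      ‖(((∏ i, x₀f i ^ p.1 i : ℂˣ) * cexpu (s * Y p) : ℂˣ) : ℂ)‖
        = R p * Real.exp (s * Y p) := by
    intro s p
    rw [Units.val_mul, norm_mul, abs_units_prod, abs_cexpu]
  have hsumswap : ∀ (s : ℝ) (p : (Fin n → ℤ) × ℂˣ),
      ∑ i, (p.1 i : ℝ) * (s * y i) = s * Y p := by
    intro s p
    rw [hYdef, Finset.mul_sum]
    exact Finset.sum_congr rfl fun i _ => by ring
  refine ⟨y, ?_, ?_⟩
  · intro s hs p hp heq
    rw [prod_mul_cexpu, hsumswap] at heq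
    have habs := congrArg (fun u : ℂˣ => ‖((u : ℂˣ) : ℂ)‖) heq
    rw [habsprod, hA p hp] at habs
    have hzero := core p hp s (abs_le.mpr ⟨by linarith [hs.1], hs.2⟩) habs
    rw [hzero] at heq
    have : cexpu 0 = 1 := by
      ext
      simp [cexpu]
    rw [this, mul_one] at heq
    exact hx₀S p hp heq
  · intro p hp hp0 heq
    have hcoord : ∀ i, Real.exp (y i) * ‖(x₀f i : ℂ)‖
        = ‖((x₀f i * cexpu (y i) : ℂˣ) : ℂ)‖ := by
      intro i
      rw [Units.val_mul, norm_mul, abs_cexpu, mul_comm]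
    have hprod : ∏ i, (Real.exp (y i) * ‖(x₀f i : ℂ)‖) ^ p.1 i
        = R p * Real.exp (Y p) := by
      calc ∏ i, (Real.exp (y i) * ‖(x₀f i : ℂ)‖) ^ p.1 i
          = ∏ i, ‖((x₀f i * cexpu (y i) : ℂˣ) : ℂ)‖ ^ p.1 i :=
            Finset.prod_congr rfl fun i _ => by rw [hcoord]
        _ = ‖((∏ i, (x₀f i * cexpu (y i)) ^ p.1 i : ℂˣ) : ℂ)‖ :=
            (abs_units_prod _ _).symm
        _ = ‖(((∏ i, x₀f i ^ p.1 i : ℂˣ) * cexpu (Y p) : ℂˣ) : ℂ)‖ := by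
            rw [prod_mul_cexpu]
        _ = R p * Real.exp (Y p) := by
            have h := habsprod 1 p
            rw [one_mul] at h
            exact h
    rw [hprod] at heq
    have hzero := core p hp 1 (by norm_num) (by rw [one_mul]; exact heq)
    rw [one_mul] at hzero
    exact (hy p hp).1 hp0 hzero
end Main

lemma continuous_units_of_val {α : Type*} [TopologicalSpace α] {f : α → ℂˣ}
    (h : Continuous fun a => ((f a : ℂˣ) : ℂ)) : Continuous f := by
  refine Units.continuous_iff.mpr ⟨h, ?_⟩
  have heq : (fun a => (((f a)⁻¹ : ℂˣ) : ℂ)) = fun a => (((f a : ℂˣ) : ℂ))⁻¹ :=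
    funext fun a => Units.val_inv_eq_inv_val _
  rw [heq]
  exact h.inv₀ fun a => Units.ne_zero _



/-- Let `𝒜` be a complexified essential toric arrangement on the torus
`T_Λ ≅ (ℂ*)ⁿ` with complement `M(𝒜)`, and let
`ε : π₁(M(𝒜)) → π₁(T_Λ)` be induced by the inclusion.  Then `ε` admits a
group-theoretic section `ξ` with `ε ∘ ξ = id`. -/
theorem epsilon_has_section (n : ℕ)
    (A : Finset ((Fin n → ℤ) × ℂˣ))
    (hA : ∀ p ∈ A, ‖((p.2 : ℂˣ) : ℂ)‖ = 1)
    (hess : Module.finrank ℤ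
      (Submodule.span ℤ {v : Fin n → ℤ | ∃ p ∈ A, p.1 = v}) = n)
    (x₀ : ({x : Fin n → ℂˣ | ∀ p ∈ A, (∏ i, x i ^ p.1 i) ≠ p.2} : Set (Fin n → ℂˣ))) :
    ∃ ξ : FundamentalGroup (Fin n → ℂˣ)
        ((⟨Subtype.val, continuous_subtype_val⟩ :
          C(({x : Fin n → ℂˣ | ∀ p ∈ A, (∏ i, x i ^ p.1 i) ≠ p.2} : Set (Fin n → ℂˣ)),
            Fin n → ℂˣ)) x₀) →*
      FundamentalGroup
        ({x : Fin n → ℂˣ | ∀ p ∈ A, (∏ i, x i ^ p.1 i) ≠ p.2} : Set (Fin n → ℂˣ)) x₀,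
      (pi1map (⟨Subtype.val, continuous_subtype_val⟩ :
          C(({x : Fin n → ℂˣ | ∀ p ∈ A, (∏ i, x i ^ p.1 i) ≠ p.2} : Set (Fin n → ℂˣ)),
            Fin n → ℂˣ)) x₀).comp ξ = MonoidHom.id _ := by
  classical
  have hx₀S : ∀ p ∈ A, (∏ i, x₀.1 i ^ p.1 i) ≠ p.2 := x₀.2
  obtain ⟨y, hpath, hgen⟩ := main_construction A hA x₀.1 hx₀S
  set ρ : Fin n → ℝ := fun i => Real.exp (y i) * ‖(x₀.1 i : ℂ)‖ with hρ
  have hρpos : ∀ i, 0 < ρ i := fun i =>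
    mul_pos (Real.exp_pos _) (norm_pos_iff.mpr (Units.ne_zero _))
  have habsne : ∀ (z : Fin n → ℂˣ) (i : Fin n), ‖(z i : ℂ)‖ ≠ 0 :=
    fun z i => norm_ne_zero_iff.mpr (Units.ne_zero _)
  have hne : ∀ (z : Fin n → ℂˣ) (i : Fin n),
      (ρ i : ℂ) * (z i : ℂ) / ((‖(z i : ℂ)‖ : ℝ) : ℂ) ≠ 0 := by
    intro z i
    apply div_ne_zero
    · exact mul_ne_zero (Complex.ofReal_ne_zero.mpr (ne_of_gt (hρpos i))) (Units.ne_zero _)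
    · exact Complex.ofReal_ne_zero.mpr (habsne z i)
  set gfun : (Fin n → ℂˣ) → Fin n → ℂˣ := fun z i => Units.mk0 _ (hne z i) with hgfun
  have habsg : ∀ z i, ‖(gfun z i : ℂ)‖ = ρ i := by
    intro z i
    rw [hgfun]
    simp only [Units.val_mk0]
    rw [norm_div, norm_mul, Complex.norm_real, Complex.norm_real, Real.norm_eq_abs, Real.norm_eq_abs,
      abs_of_pos (hρpos i), abs_of_nonneg (norm_nonneg _), mul_div_assoc, div_self (habsne z i), mul_one]
  have hgmem : ∀ z, gfun z ∈ ({x : Fin n → ℂˣ | ∀ p ∈ A, (∏ i, x i ^ p.1 i) ≠ p.2} : Set (Fin n → ℂˣ)) := by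
    intro z p hp
    by_cases hp0 : p.1 = 0
    · have h1 : (∏ i, gfun z i ^ p.1 i) = 1 := by simp [hp0]
      have h0 : (∏ i, x₀.1 i ^ p.1 i) = 1 := by simp [hp0]
      have := hx₀S p hp
      rw [h0] at this
      rwa [h1]
    · intro heq
      have habs := congrArg (fun u : ℂˣ => ‖((u : ℂˣ) : ℂ)‖) heq
      rw [abs_units_prod, hA p hp] at habs
      refine hgen p hp hp0 ?_
      rw [← habs]
      exact Finset.prod_congr rfl fun i _ => by rw [habsg]
  have hgcont : Continuous (fun z : Fin n → ℂˣ => gfun z) := by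
    apply continuous_pi
    intro i
    apply continuous_units_of_val
    simp only [hgfun, Units.val_mk0]
    refine Continuous.div ?_ ?_ (fun z => Complex.ofReal_ne_zero.mpr (habsne z i))
    · exact continuous_const.mul (Units.continuous_val.comp (continuous_apply i))
    · exact Complex.continuous_ofReal.comp
        (continuous_norm.comp (Units.continuous_val.comp (continuous_apply i)))
  set ι : C(({x : Fin n → ℂˣ | ∀ p ∈ A, (∏ i, x i ^ p.1 i) ≠ p.2} : Set (Fin n → ℂˣ)), Fin n → ℂˣ) := ⟨Subtype.val, continuous_subtype_val⟩ with hι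
  set g : C(Fin n → ℂˣ, ({x : Fin n → ℂˣ | ∀ p ∈ A, (∏ i, x i ^ p.1 i) ≠ p.2} : Set (Fin n → ℂˣ))) := ⟨fun z => ⟨gfun z, hgmem z⟩,
    hgcont.subtype_mk _⟩ with hg
  have hHne : ∀ (q : unitInterval × (Fin n → ℂˣ)) (i : Fin n),
      ((q.2 i : ℂ) * Complex.exp ((((1 - (q.1 : ℝ)) *
        (Real.log (ρ i) - Real.log (‖(q.2 i : ℂ)‖))) : ℝ) : ℂ)) ≠ 0 :=
    fun q i => mul_ne_zero (Units.ne_zero _) (Complex.exp_ne_zero _)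
  have hHcont : Continuous (fun q : unitInterval × (Fin n → ℂˣ) =>
      fun i => Units.mk0 _ (hHne q i)) := by
    apply continuous_pi
    intro i
    apply continuous_units_of_val
    simp only [Units.val_mk0]
    apply Continuous.mul
    · exact Units.continuous_val.comp ((continuous_apply i).comp continuous_snd)
    · refine Complex.continuous_exp.comp (Complex.continuous_ofReal.comp ?_)
      refine Continuous.mul ?_ ?_
      · exact continuous_const.sub (continuous_subtype_val.comp continuous_fst)
      · refine Continuous.sub continuous_const ?_
        refine Continuous.log ?_ ?_
        · exact continuous_norm.comp
            (Units.continuous_val.comp ((continuous_apply i).comp continuous_snd))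
        · intro q
          exact habsne q.2 i
  set H : ContinuousMap.Homotopy (ι.comp g) (ContinuousMap.id (Fin n → ℂˣ)) :=
    { toFun := fun q => fun i => Units.mk0 _ (hHne q i)
      continuous_toFun := hHcont
      map_zero_left := by
        intro z
        funext i
        refine Units.ext ?_
        show ((z i : ℂˣ) : ℂ) * Complex.exp ((((1 - ((0:unitInterval) : ℝ)) *
            (Real.log (ρ i) - Real.log (‖(z i : ℂ)‖))) : ℝ) : ℂ)
          = ((((ι.comp g) z : Fin n → ℂˣ) i : ℂˣ) : ℂ)
        rw [show ((0 : unitInterval) : ℝ) = 0 from rfl]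
        rw [show ((1:ℝ) - 0) = 1 by ring, one_mul, ← Complex.ofReal_exp, Real.exp_sub,
          Real.exp_log (hρpos i), Real.exp_log (norm_pos_iff.mpr (Units.ne_zero _))]
        show _ = ((gfun z i : ℂˣ) : ℂ)
        rw [hgfun]
        simp only [Units.val_mk0]
        push_cast
        ring
      map_one_left := by
        intro z
        funext i
        refine Units.ext ?_
        show ((z i : ℂˣ) : ℂ) * Complex.exp ((((1 - ((1:unitInterval) : ℝ)) *
            (Real.log (ρ i) - Real.log (‖(z i : ℂ)‖))) : ℝ) : ℂ)
          = (((ContinuousMap.id (Fin n → ℂˣ)) z i : ℂˣ) : ℂ)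
        rw [show ((1 : unitInterval) : ℝ) = 1 from rfl]
        rw [show ((1:ℝ) - 1) = 0 by ring, zero_mul, Complex.ofReal_zero, Complex.exp_zero,
          mul_one]
        rfl } with hH
  have hicc : ∀ t : unitInterval, (1 - (t:ℝ)) ∈ Set.Icc (0:ℝ) 1 :=
    fun t => ⟨by linarith [t.2.2], by linarith [t.2.1]⟩
  have hβmem : ∀ t : unitInterval,
      (fun i => x₀.1 i * cexpu ((1 - (t:ℝ)) * y i)) ∈ ({x : Fin n → ℂˣ | ∀ p ∈ A, (∏ i, x i ^ p.1 i) ≠ p.2} : Set (Fin n → ℂˣ)) :=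
    fun t => hpath _ (hicc t)
  set βfun : unitInterval → ({x : Fin n → ℂˣ | ∀ p ∈ A, (∏ i, x i ^ p.1 i) ≠ p.2} : Set (Fin n → ℂˣ)) := fun t =>
    ⟨fun i => x₀.1 i * cexpu ((1 - (t:ℝ)) * y i), hβmem t⟩ with hβfun
  have hβcont : Continuous βfun := by
    refine Continuous.subtype_mk ?_ _
    refine continuous_pi fun i => continuous_units_of_val ?_
    show Continuous fun t : unitInterval =>
      ((x₀.1 i : ℂˣ) : ℂ) * Complex.exp ((((1 - (t:ℝ)) * y i : ℝ)) : ℂ)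
    refine continuous_const.mul (Complex.continuous_exp.comp
      (Complex.continuous_ofReal.comp ?_))
    exact (continuous_const.sub continuous_subtype_val).mul continuous_const
  set β : Path (g (ι x₀)) x₀ :=
    { toFun := βfun
      continuous_toFun := hβcont
      source' := by
        refine Subtype.ext (funext fun i => Units.ext ?_)
        show ((x₀.1 i : ℂˣ) : ℂ) * Complex.exp ((((1 - ((0:unitInterval):ℝ)) * y i : ℝ)) : ℂ)
          = ((gfun (ι x₀) i : ℂˣ) : ℂ)
        rw [show ((0 : unitInterval) : ℝ) = 0 from rfl]
        rw [hgfun]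
        simp only [Units.val_mk0]
        rw [hρ]
        push_cast
        rw [← Complex.ofReal_exp]
        have hι0 : ((ι x₀ : Fin n → ℂˣ) i : ℂ) = ((x₀.1 i : ℂˣ) : ℂ) := rfl
        rw [hι0]
        field_simp
        rw [Complex.ofReal_exp]
        ring
      target' := by
        refine Subtype.ext (funext fun i => Units.ext ?_)
        show ((x₀.1 i : ℂˣ) : ℂ) * Complex.exp ((((1 - ((1:unitInterval):ℝ)) * y i : ℝ)) : ℂ)
          = ((x₀.1 i : ℂˣ) : ℂ)
        rw [show ((1 : unitInterval) : ℝ) = 1 from rfl]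
        norm_num } with hβ'
  have hβH : ∀ t, ι (β t) = H (t, ι x₀) := by
    intro t
    funext i
    refine Units.ext ?_
    show ((x₀.1 i : ℂˣ) : ℂ) * Complex.exp ((((1 - (t:ℝ)) * y i : ℝ)) : ℂ)
      = (((ι x₀ : Fin n → ℂˣ) i : ℂˣ) : ℂ) * Complex.exp ((((1 - (t:ℝ)) *
          (Real.log (ρ i) - Real.log (‖((ι x₀ : Fin n → ℂˣ) i : ℂ)‖))) : ℝ) : ℂ)
    have hlog : Real.log (ρ i) - Real.log (‖((ι x₀ : Fin n → ℂˣ) i : ℂ)‖) = y i := by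
      rw [hρ]
      rw [Real.log_mul (Real.exp_ne_zero _) (habsne _ i), Real.log_exp]
      have h2 : ‖((ι x₀ : Fin n → ℂˣ) i : ℂ)‖ = ‖(x₀.1 i : ℂ)‖ := rfl
      rw [h2]
      ring
    rw [hlog]
    rfl
  exact section_of_homotopy ι g x₀ H β hβH
end
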